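/- arXiv:1406.7552 — 4 statements merged into one kernel-verified Lean document; each statement's English description precedes it below -/
import Mathlib

section
/- Let n and m be two positive integers with m ≤ n/11. Every tournament T on n vertices contains two disjoint sets of distinct vertices {x_1, ..., x_m} and {y_1, ..., y_m} such that for any permutation σ of {1, ..., m} there are pairwise vertex-disjoint directed paths P_1, ..., P_m in T such that P_i goes from x_i to y_{σ(i)}. -/
/-- `Adj` is a tournament relation: no loops, and there is exactly one directed
edge between any two distinct vertices. -/
def IsTournament {V : Type*} (Adj : V → V → Prop) : Prop :=
  (∀ v, ¬ Adj v v) ∧ ∀ u v : V, u ≠ v → (Adj u v ↔ ¬ Adj v u)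

/-- `p` is a directed path from `x` to `y`: a nonempty list of distinct vertices,
starting at `x`, ending at `y`, in which consecutive vertices are joined by a
directed edge in the forward direction. -/
def IsDipath {V : Type*} (Adj : V → V → Prop) (x y : V) (p : List V) : Prop :=
  p ≠ [] ∧ p.Nodup ∧ p.Chain' Adj ∧ p.head? = some x ∧ p.getLast? = some y

open scoped Classical
open Finset

theorem count_lemma {V : Type*} [DecidableEq V] (Adj : V → V → Prop)
    (hT : IsTournament Adj) (S : Finset V) (D : ℕ)
    (hd : ∀ v ∈ S, (S.filter (fun u => Adj v u)).card ≤ D) :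
    S.card ≤ 2 * D + 1 := by
  classical
  rcases S.eq_empty_or_nonempty with h | h
  · simp [h]
  set F1 := S.offDiag.filter (fun p => Adj p.1 p.2) with hF1
  set F2 := S.offDiag.filter (fun p => Adj p.2 p.1) with hF2
  have hsub : S.offDiag ⊆ F1 ∪ F2 := by
    intro p hp
    rw [Finset.mem_offDiag] at hp
    rcases Classical.em (Adj p.1 p.2) with ha | ha
    · exact Finset.mem_union_left _ (Finset.mem_filter.2 ⟨by rw [Finset.mem_offDiag]; exact hp, ha⟩)
    · have : Adj p.2 p.1 := ((hT.2 p.2 p.1 hp.2.2.symm).2 ha)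
      exact Finset.mem_union_right _ (Finset.mem_filter.2 ⟨by rw [Finset.mem_offDiag]; exact hp, this⟩)
  have hc1 : F1.card ≤ S.card * D := by
    have hfib : ∀ p ∈ F1, p.1 ∈ S := by
      intro p hp; exact (Finset.mem_offDiag.1 (Finset.mem_filter.1 hp).1).1
    rw [Finset.card_eq_sum_card_fiberwise hfib]
    calc ∑ v ∈ S, (F1.filter (fun p => p.1 = v)).card
        ≤ ∑ v ∈ S, D := by
          apply Finset.sum_le_sum
          intro v hv
          refine le_trans (Finset.card_le_card_of_injOn (fun p => p.2) ?_ ?_) (hd v hv)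
          · intro p hp
            simp only [Finset.mem_coe, Finset.mem_filter] at hp
            rcases hp with ⟨hp1, hp2⟩
            rcases Finset.mem_filter.1 hp1 with ⟨hpo, hpa⟩
            rw [Finset.mem_offDiag] at hpo
            subst hp2
            exact Finset.mem_filter.2 ⟨hpo.2.1, hpa⟩
          · intro p hp q hq hpq
            simp only [Finset.coe_filter, Set.mem_setOf_eq] at hp hq
            exact Prod.ext (hp.2.trans hq.2.symm) hpq
      _ = S.card * D := by rw [Finset.sum_const, smul_eq_mul]
  have hc2 : F2.card ≤ S.card * D := by
    have hfib : ∀ p ∈ F2, p.2 ∈ S := by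
      intro p hp; exact (Finset.mem_offDiag.1 (Finset.mem_filter.1 hp).1).2.1
    rw [Finset.card_eq_sum_card_fiberwise hfib]
    calc ∑ v ∈ S, (F2.filter (fun p => p.2 = v)).card
        ≤ ∑ v ∈ S, D := by
          apply Finset.sum_le_sum
          intro v hv
          refine le_trans (Finset.card_le_card_of_injOn (fun p => p.1) ?_ ?_) (hd v hv)
          · intro p hp
            simp only [Finset.mem_coe, Finset.mem_filter] at hp
            rcases hp with ⟨hp1, hp2⟩
            rcases Finset.mem_filter.1 hp1 with ⟨hpo, hpa⟩
            rw [Finset.mem_offDiag] at hpo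
            subst hp2
            exact Finset.mem_filter.2 ⟨hpo.1, hpa⟩
          · intro p hp q hq hpq
            simp only [Finset.coe_filter, Set.mem_setOf_eq] at hp hq
            exact Prod.ext hpq (hp.2.trans hq.2.symm)
      _ = S.card * D := by rw [Finset.sum_const, smul_eq_mul]
  have hoff : S.offDiag.card ≤ 2 * (S.card * D) :=
    le_trans (Finset.card_le_card hsub) (le_trans (Finset.card_union_le _ _) (by omega))
  rw [Finset.offDiag_card] at hoff
  have hpos : 1 ≤ S.card := Finset.Nonempty.card_pos h
  have hoff2 : S.card * S.card ≤ 2 * (S.card * D) + S.card := Nat.sub_le_iff_le_add.mp hoff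
  by_contra hcc
  push_neg at hcc
  nlinarith

theorem flip_tournament {V : Type*} {Adj : V → V → Prop} (hT : IsTournament Adj) :
    IsTournament (fun u v => Adj v u) := by
  exact ⟨hT.1, fun u v huv => by simpa using hT.2 v u (Ne.symm huv)⟩

theorem many_big_outdeg {V : Type*} [Fintype V] [DecidableEq V] (Adj : V → V → Prop)
    (hT : IsTournament Adj) (m : ℕ) (hm : 1 ≤ m) (hn : 11 * m ≤ Fintype.card V) :
    m ≤ (univ.filter (fun v : V => 5 * m ≤ (univ.filter (fun u => Adj v u)).card)).card := by
  classical
  by_contra hc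
  push_neg at hc
  set Hp := univ.filter (fun v : V => 5 * m ≤ (univ.filter (fun u => Adj v u)).card) with hHp
  set S := (univ : Finset V) \ Hp with hS
  have hScard : S.card = Fintype.card V - Hp.card := by
    rw [hS, Finset.card_sdiff_of_subset (Finset.subset_univ _), Finset.card_univ]
  have hd : ∀ v ∈ S, (S.filter (fun u => Adj v u)).card ≤ 5 * m - 1 := by
    intro v hv
    have hvH : v ∉ Hp := (Finset.mem_sdiff.1 hv).2
    have h1 : ¬ (5 * m ≤ (univ.filter (fun u => Adj v u)).card) := by
      intro h; exact hvH (Finset.mem_filter.2 ⟨Finset.mem_univ _, h⟩)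
    push_neg at h1
    have h2 : (S.filter (fun u => Adj v u)).card ≤ (univ.filter (fun u => Adj v u)).card :=
      Finset.card_le_card (Finset.filter_subset_filter _ (Finset.subset_univ _))
    omega
  have := count_lemma Adj hT S (5 * m - 1) hd
  omega

theorem cover_lemma {V : Type*} [Fintype V] [DecidableEq V] (Adj : V → V → Prop)
    (hT : IsTournament Adj) (m : ℕ) (hm : 1 ≤ m) (hn : 11 * m ≤ Fintype.card V) (v : V)
    (hout : (univ.filter (fun u => Adj v u)).card < 5 * m) :
    5 * m ≤ (univ.filter (fun u => Adj u v)).card := by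
  classical
  have hsub : (univ : Finset V).erase v ⊆
      (univ.filter (fun u => Adj v u)) ∪ (univ.filter (fun u => Adj u v)) := by
    intro u hu
    have huv : u ≠ v := Finset.ne_of_mem_erase hu
    rcases Classical.em (Adj v u) with h | h
    · exact Finset.mem_union_left _ (Finset.mem_filter.2 ⟨Finset.mem_univ _, h⟩)
    · exact Finset.mem_union_right _ (Finset.mem_filter.2 ⟨Finset.mem_univ _, (hT.2 u v huv).2 h⟩)
  have h1 : ((univ : Finset V).erase v).card = Fintype.card V - 1 := by
    rw [Finset.card_erase_of_mem (Finset.mem_univ _), Finset.card_univ]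
  have h2 := le_trans (Finset.card_le_card hsub) (Finset.card_union_le _ _)
  omega

theorem star_lemma {V : Type*} [Fintype V] [DecidableEq V] (Adj : V → V → Prop)
    (hT : IsTournament Adj) (m : ℕ) (hm : 1 ≤ m)
    (hnopair : ¬ ∃ Xf Yf : Finset V, Xf.card = m ∧ Yf.card = m ∧ Disjoint Xf Yf ∧
      ∀ a ∈ Xf, ∀ b ∈ Yf, Adj a b)
    (R : Finset V) (hR : m ≤ R.card) :
    (univ.filter (fun v : V => v ∉ R ∧ ∀ r ∈ R, ¬ Adj v r)).card < m := by
  classical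
  by_contra hc
  push_neg at hc
  set F := univ.filter (fun v : V => v ∉ R ∧ ∀ r ∈ R, ¬ Adj v r) with hF
  obtain ⟨Xf, hXsub, hXcard⟩ := Finset.exists_subset_card_eq hR
  obtain ⟨Yf, hYsub, hYcard⟩ := Finset.exists_subset_card_eq hc
  apply hnopair
  refine ⟨Xf, Yf, hXcard, hYcard, ?_, ?_⟩
  · rw [Finset.disjoint_left]
    intro a haX haY
    have := (Finset.mem_filter.1 (hYsub haY)).2.1
    exact this (hXsub haX)
  · intro a haX b hbY
    have hb := (Finset.mem_filter.1 (hYsub hbY)).2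
    have hba : ¬ Adj b a := hb.2 a (hXsub haX)
    have hne : a ≠ b := by rintro rfl; exact hb.1 (hXsub haX)
    exact (hT.2 a b hne).2 hba

theorem path_step {V : Type*} [Fintype V] [DecidableEq V] (Adj : V → V → Prop)
    (hT : IsTournament Adj) (m : ℕ) (hm : 1 ≤ m)
    (hstar : ∀ R : Finset V, m ≤ R.card →
      (univ.filter (fun v : V => v ∉ R ∧ ∀ r ∈ R, ¬ Adj v r)).card < m)
    (x y : V) (hxy : x ≠ y)
    (hx : 5 * m ≤ (univ.filter (fun u => Adj x u)).card)
    (hy : 5 * m ≤ (univ.filter (fun u => Adj u y)).card)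
    (B : Finset V) (hxB : x ∈ B) (hyB : y ∈ B) (hB : B.card ≤ 4 * m - 2) :
    ∃ (L : List V) (I : List V), L = x :: (I ++ [y]) ∧ I.length ≤ 2 ∧
      (∀ v ∈ I, v ∉ B) ∧ IsDipath Adj x y L := by
  classical
  have hirr := hT.1
  set Bin := univ.filter (fun r => Adj r y) with hBin
  set R := insert y (Bin \ B) with hR
  have hRcard : m ≤ R.card := by
    have h1 : Bin.card - B.card ≤ (Bin \ B).card := Finset.le_card_sdiff _ _
    have h2 : (Bin \ B).card ≤ R.card := Finset.card_le_card (Finset.subset_insert _ _)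
    omega
  have hFc := hstar R hRcard
  set F := univ.filter (fun v : V => v ∉ R ∧ ∀ r ∈ R, ¬ Adj v r) with hF
  set A := ((univ.filter (fun u => Adj x u)) \ B) \ F with hA
  have hAne : A.Nonempty := by
    rw [← Finset.card_pos]
    have h1 : (univ.filter (fun u => Adj x u)).card - B.card ≤
        ((univ.filter (fun u => Adj x u)) \ B).card := Finset.le_card_sdiff _ _
    have h2 : ((univ.filter (fun u => Adj x u)) \ B).card - F.card ≤ A.card :=
      Finset.le_card_sdiff _ _
    omega
  obtain ⟨a, ha⟩ := hAne
  rw [hA, Finset.mem_sdiff, Finset.mem_sdiff, Finset.mem_filter] at ha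
  obtain ⟨⟨⟨-, hxa⟩, haB⟩, haF⟩ := ha
  have hax : a ≠ x := by rintro rfl; exact hirr a hxa
  have hay' : a ≠ y := by rintro rfl; exact haB hyB
  by_cases hay : Adj a y
  · refine ⟨[x, a, y], [a], rfl, by norm_num, ?_, ?_, ?_, ?_, ?_, ?_⟩
    · intro v hv; simp at hv; subst hv; exact haB
    · simp
    · refine List.nodup_cons.2 ⟨?_, List.nodup_cons.2 ⟨?_, List.nodup_singleton _⟩⟩
      · intro h
        rcases List.mem_cons.1 h with h | h
        · exact hax h.symm
        · exact hxy (by simpa using h)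
      · intro h
        exact hay' (by simpa using h)
    · simp [List.Chain', List.isChain_cons_cons]
      exact ⟨hxa, hay⟩
    · rfl
    · rfl
  · have haR : a ∉ R := by
      rw [hR, Finset.mem_insert]
      rintro (rfl | hmem)
      · exact hay' rfl
      · exact hay (Finset.mem_filter.1 (Finset.mem_sdiff.1 hmem).1).2
    have : ¬ (a ∉ R ∧ ∀ r ∈ R, ¬ Adj a r) := by
      intro hcontra
      exact haF (Finset.mem_filter.2 ⟨Finset.mem_univ _, hcontra⟩)
    push_neg at this
    obtain ⟨r, hrR, har⟩ := this haR
    have hry : r ≠ y := by rintro rfl; exact hay har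
    have hrmem : r ∈ Bin \ B := by
      rw [hR, Finset.mem_insert] at hrR
      tauto
    rw [Finset.mem_sdiff] at hrmem
    have hrAdj : Adj r y := (Finset.mem_filter.1 hrmem.1).2
    have hrB : r ∉ B := hrmem.2
    have hrx : r ≠ x := by rintro rfl; exact hrB hxB
    have har' : a ≠ r := by rintro rfl; exact hirr a har
    refine ⟨[x, a, r, y], [a, r], rfl, by norm_num, ?_, ?_, ?_, ?_, ?_, ?_⟩
    · intro v hv; simp at hv; rcases hv with rfl | rfl
      · exact haB
      · exact hrB
    · simp
    · refine List.nodup_cons.2 ⟨?_, List.nodup_cons.2 ⟨?_, List.nodup_cons.2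
        ⟨?_, List.nodup_singleton _⟩⟩⟩
      · intro h
        rcases List.mem_cons.1 h with h | h
        · exact hax h.symm
        · rcases List.mem_cons.1 h with h | h
          · exact hrx h.symm
          · exact hxy (by simpa using h)
      · intro h
        rcases List.mem_cons.1 h with h | h
        · exact har' h
        · exact hay' (by simpa using h)
      · intro h
        exact hry (by simpa using h)
    · simp [List.Chain', List.isChain_cons_cons]
      exact ⟨hxa, har, hrAdj⟩
    · rfl
    · rfl

theorem greedy_paths {V : Type*} [Fintype V] [DecidableEq V] (Adj : V → V → Prop)
    (hT : IsTournament Adj) (m : ℕ) (hm : 1 ≤ m)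
    (hstar : ∀ R : Finset V, m ≤ R.card →
      (univ.filter (fun v : V => v ∉ R ∧ ∀ r ∈ R, ¬ Adj v r)).card < m)
    (Xf Yf : Finset V) (hdisj : Disjoint Xf Yf)
    (hXcard : Xf.card = m) (hYcard : Yf.card = m)
    (x y : Fin m → V) (hxinj : Function.Injective x) (hyinj : Function.Injective y)
    (hxX : ∀ i, x i ∈ Xf) (hyY : ∀ i, y i ∈ Yf)
    (hxdeg : ∀ i, 5 * m ≤ (univ.filter (fun u => Adj (x i) u)).card)
    (hydeg : ∀ i, 5 * m ≤ (univ.filter (fun u => Adj u (y i))).card)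
    (σ : Equiv.Perm (Fin m)) :
    ∀ k, k ≤ m → ∃ P : Fin m → List V,
      (∀ i : Fin m, (i : ℕ) < k → ∃ I : List V, P i = x i :: (I ++ [y (σ i)]) ∧
        I.length ≤ 2 ∧ (∀ v ∈ I, v ∉ Xf ∪ Yf) ∧ IsDipath Adj (x i) (y (σ i)) (P i)) ∧
      (∀ i j : Fin m, (i : ℕ) < k → (j : ℕ) < k → i ≠ j → ∀ v, v ∈ P i → v ∉ P j) := by
  intro k
  induction k with
  | zero =>
    intro _
    exact ⟨fun _ => [], fun i hi => absurd hi (by omega), fun i j hi => absurd hi (by omega)⟩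
  | succ k ih =>
    intro hk1
    obtain ⟨P, hP1, hP2⟩ := ih (by omega)
    have hkm : k < m := hk1
    set i₀ : Fin m := ⟨k, hkm⟩ with hi₀
    have hi₀val : (i₀ : ℕ) = k := rfl
    set J := univ.filter (fun j : Fin m => (j : ℕ) < k) with hJ
    set W := J.biUnion (fun j => (P j).toFinset) with hW
    set XY := Xf ∪ Yf with hXY
    set B := XY ∪ W with hB
    -- card bounds
    have hXYcard : XY.card = 2 * m := by
      rw [hXY, Finset.card_union_of_disjoint hdisj, hXcard, hYcard]; ring
    have hJcard : J.card ≤ k := by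
      have h1 : J.card ≤ (Finset.range k).card := by
        refine Finset.card_le_card_of_injOn (fun j => (j : ℕ)) ?_ ?_
        · intro j hj
          exact Finset.mem_range.2 ((Finset.mem_filter.1 hj).2)
        · intro a _ b _ hab
          exact Fin.ext hab
      simpa using h1
    have hWcard : (W \ XY).card ≤ 2 * k := by
      have hsub : W \ XY ⊆ J.biUnion (fun j => (P j).toFinset \ XY) := by
        intro v hv
        rw [Finset.mem_sdiff, hW, Finset.mem_biUnion] at hv
        obtain ⟨⟨j, hjJ, hjv⟩, hvXY⟩ := hv
        rw [Finset.mem_biUnion]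
        exact ⟨j, hjJ, Finset.mem_sdiff.2 ⟨hjv, hvXY⟩⟩
      refine (Finset.card_le_card hsub).trans ((Finset.card_biUnion_le).trans ?_)
      have hper : ∀ j ∈ J, ((P j).toFinset \ XY).card ≤ 2 := by
        intro j hjJ
        have hjk : (j : ℕ) < k := (Finset.mem_filter.1 hjJ).2
        obtain ⟨I, hshape, hIlen, hIXY, -⟩ := hP1 j hjk
        have : (P j).toFinset \ XY ⊆ I.toFinset := by
          intro v hv
          rw [Finset.mem_sdiff, List.mem_toFinset, hshape] at hv
          obtain ⟨hvmem, hvXY⟩ := hv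
          rcases List.mem_cons.1 hvmem with rfl | hvmem'
          · exact absurd (Finset.mem_union_left _ (hxX j)) hvXY
          · rcases List.mem_append.1 hvmem' with hvI | hvy
            · exact List.mem_toFinset.2 hvI
            · rw [List.mem_singleton] at hvy
              subst hvy
              exact absurd (Finset.mem_union_right _ (hyY (σ j))) hvXY
        calc ((P j).toFinset \ XY).card ≤ I.toFinset.card := Finset.card_le_card this
          _ ≤ I.length := I.toFinset_card_le
          _ ≤ 2 := hIlen
      calc (∑ j ∈ J, ((P j).toFinset \ XY).card) ≤ ∑ j ∈ J, 2 := Finset.sum_le_sum hper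
        _ = 2 * J.card := by rw [Finset.sum_const, smul_eq_mul]; ring
        _ ≤ 2 * k := by omega
    have hBcard : B.card ≤ 4 * m - 2 := by
      have h1 : B ⊆ XY ∪ (W \ XY) := by
        intro v hv
        rcases Finset.mem_union.1 hv with h | h
        · exact Finset.mem_union_left _ h
        · by_cases hXYv : v ∈ XY
          · exact Finset.mem_union_left _ hXYv
          · exact Finset.mem_union_right _ (Finset.mem_sdiff.2 ⟨h, hXYv⟩)
      have := (Finset.card_le_card h1).trans (Finset.card_union_le _ _)
      omega
    -- find the new path
    have hxyne : x i₀ ≠ y (σ i₀) := by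
      intro h
      exact (Finset.disjoint_left.1 hdisj) (hxX i₀) (h ▸ hyY (σ i₀))
    have hxB : x i₀ ∈ B := Finset.mem_union_left _ (Finset.mem_union_left _ (hxX i₀))
    have hyB : y (σ i₀) ∈ B := Finset.mem_union_left _ (Finset.mem_union_right _ (hyY (σ i₀)))
    obtain ⟨L, I, hshape, hIlen, hIB, hdip⟩ :=
      path_step Adj hT m hm hstar (x i₀) (y (σ i₀)) hxyne (hxdeg i₀) (hydeg (σ i₀)) B hxB hyB hBcard
    set P' := Function.update P i₀ L with hP'
    -- key claim : L is disjoint from all old paths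
    have hkey : ∀ j : Fin m, (j : ℕ) < k → ∀ v, v ∈ L → v ∉ P j := by
      intro j hjk v hvL hvPj
      obtain ⟨Ij, hshapej, hIlenj, hIXYj, -⟩ := hP1 j hjk
      have hji₀ : j ≠ i₀ := by
        intro h; rw [h] at hjk; omega
      rw [hshape] at hvL
      have hvPj' := hvPj
      rw [hshapej] at hvPj'
      -- decompose membership in P j
      have hPjcase : v = x j ∨ v ∈ Ij ∨ v = y (σ j) := by
        rcases List.mem_cons.1 hvPj' with h | h
        · exact Or.inl h
        · rcases List.mem_append.1 h with h | h
          · exact Or.inr (Or.inl h)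
          · exact Or.inr (Or.inr (List.mem_singleton.1 h))
      rcases List.mem_cons.1 hvL with rfl | hvL'
      · -- v = x i₀
        rcases hPjcase with h | h | h
        · exact hji₀ (hxinj h).symm
        · exact (hIXYj _ h) (Finset.mem_union_left _ (hxX i₀))
        · exact (Finset.disjoint_left.1 hdisj) (hxX i₀) (h ▸ hyY (σ j))
      · rcases List.mem_append.1 hvL' with hvI | hvy
        · -- v interior of L : v ∉ B ⊇ W ⊇ P j
          have hvW : v ∈ W := by
            rw [hW, Finset.mem_biUnion]
            exact ⟨j, Finset.mem_filter.2 ⟨Finset.mem_univ _, hjk⟩, List.mem_toFinset.2 hvPj⟩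
          exact (hIB v hvI) (Finset.mem_union_right _ hvW)
        · -- v = y (σ i₀)
          rw [List.mem_singleton] at hvy
          subst hvy
          rcases hPjcase with h | h | h
          · exact (Finset.disjoint_left.1 hdisj) (h ▸ hxX j) (hyY (σ i₀))
          · exact (hIXYj _ h) (Finset.mem_union_right _ (hyY (σ i₀)))
          · exact hji₀ (σ.injective (hyinj h)).symm
    refine ⟨P', ?_, ?_⟩
    · intro i hik1
      by_cases hik : (i : ℕ) < k
      · have hii₀ : i ≠ i₀ := by
          intro h; rw [h] at hik; omega
        rw [hP', Function.update_of_ne hii₀]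
        exact hP1 i hik
      · have : i = i₀ := by
          apply Fin.ext
          omega
        subst this
        rw [hP', Function.update_self]
        refine ⟨I, hshape, hIlen, ?_, hdip⟩
        intro v hv
        exact fun hXYv => (hIB v hv) (Finset.mem_union_left _ hXYv)
    · intro i j hik1 hjk1 hij v hvi hvj
      by_cases hik : (i : ℕ) < k <;> by_cases hjk : (j : ℕ) < k
      · have hii₀ : i ≠ i₀ := fun h => by rw [h] at hik; omega
        have hji₀ : j ≠ i₀ := fun h => by rw [h] at hjk; omega
        rw [hP', Function.update_of_ne hii₀] at hvi
        rw [hP', Function.update_of_ne hji₀] at hvj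
        exact hP2 i j hik hjk hij v hvi hvj
      · -- j = i₀, i old
        have hji₀ : j = i₀ := Fin.ext (by omega)
        have hii₀ : i ≠ i₀ := fun h => by rw [h] at hik; omega
        subst hji₀
        rw [hP', Function.update_of_ne hii₀] at hvi
        rw [hP', Function.update_self] at hvj
        exact hkey i hik v hvj hvi
      · -- i = i₀, j old
        have hii₀ : i = i₀ := Fin.ext (by omega)
        have hji₀ : j ≠ i₀ := fun h => by rw [h] at hjk; omega
        subst hii₀
        rw [hP', Function.update_self] at hvi
        rw [hP', Function.update_of_ne hji₀] at hvj
        exact hkey j hjk v hvi hvj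
      · exact hij (Fin.ext (by omega))

/-- Helper: turn disjoint finsets of size m with a property into the final statement. -/
theorem assemble {V : Type*} [Fintype V] [DecidableEq V] (Adj : V → V → Prop)
    (m : ℕ) (Xf Yf : Finset V) (hdisj : Disjoint Xf Yf)
    (hXcard : Xf.card = m) (hYcard : Yf.card = m) :
    ∃ x y : Fin m → V, Function.Injective x ∧ Function.Injective y ∧
      (∀ i j, x i ≠ y j) ∧ (∀ i, x i ∈ Xf) ∧ (∀ i, y i ∈ Yf) := by
  classical
  let ex := Finset.equivFinOfCardEq hXcard
  let ey := Finset.equivFinOfCardEq hYcard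
  refine ⟨fun i => (ex.symm i : V), fun i => (ey.symm i : V), ?_, ?_, ?_, ?_, ?_⟩
  · intro i j h
    exact ex.symm.injective (Subtype.ext h)
  · intro i j h
    exact ey.symm.injective (Subtype.ext h)
  · intro i j h
    have h' : ((ex.symm i : V)) = ((ey.symm j : V)) := h
    have h2 : ((ex.symm i : V)) ∈ Yf := by
      rw [h']
      exact (ey.symm j).2
    exact (Finset.disjoint_left.1 hdisj) (ex.symm i).2 h2
  · exact fun i => (ex.symm i).2
  · exact fun i => (ey.symm i).2

/-- Every tournament on `n` vertices, where `m ≤ n/11` and `m ≥ 1`, contains two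
disjoint sets of distinct vertices `{x_1, …, x_m}` and `{y_1, …, y_m}` such that
for any permutation `σ` of `[m]` there are vertex-disjoint directed paths
`P_1, …, P_m` with `P_i` going from `x_i` to `y_{σ(i)}`. -/
theorem tournament_contains_large_linkage
    {V : Type*} [Fintype V] [DecidableEq V] (Adj : V → V → Prop)
    (hT : IsTournament Adj) (n m : ℕ) (hn : Fintype.card V = n)
    (hm : 1 ≤ m) (hmn : 11 * m ≤ n) :
    ∃ x y : Fin m → V,
      Function.Injective x ∧ Function.Injective y ∧ (∀ i j, x i ≠ y j) ∧
      ∀ σ : Equiv.Perm (Fin m), ∃ P : Fin m → List V,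
        (∀ i, IsDipath Adj (x i) (y (σ i)) (P i)) ∧
        ∀ i j, i ≠ j → ∀ v, v ∈ P i → v ∉ P j := by
  classical
  have hcard : 11 * m ≤ Fintype.card V := by omega
  by_cases hpair : ∃ Xf Yf : Finset V, Xf.card = m ∧ Yf.card = m ∧ Disjoint Xf Yf ∧
      ∀ a ∈ Xf, ∀ b ∈ Yf, Adj a b
  · -- complete bipartite case : single-edge paths
    obtain ⟨Xf, Yf, hXcard, hYcard, hdisj, hcomp⟩ := hpair
    obtain ⟨x, y, hxinj, hyinj, hxy, hxX, hyY⟩ := assemble Adj m Xf Yf hdisj hXcard hYcard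
    refine ⟨x, y, hxinj, hyinj, hxy, ?_⟩
    intro σ
    refine ⟨fun i => [x i, y (σ i)], ?_, ?_⟩
    · intro i
      refine ⟨by simp, ?_, ?_, rfl, rfl⟩
      · exact List.nodup_cons.2 ⟨by simp [hxy i (σ i)], List.nodup_singleton _⟩
      · exact List.isChain_pair.2 (hcomp _ (hxX i) _ (hyY (σ i)))
    · intro i j hij v hvi hvj
      simp only [List.mem_cons, List.mem_singleton, List.not_mem_nil, or_false] at hvi hvj
      rcases hvi with rfl | rfl
      · rcases hvj with h | h
        · exact hij (hxinj h)
        · exact hxy i (σ j) h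
      · rcases hvj with h | h
        · exact hxy j (σ i) h.symm
        · exact hij (σ.injective (hyinj h))
  · -- expansion case
    have hstar := star_lemma Adj hT m hm hpair
    set Hp := univ.filter (fun v : V => 5 * m ≤ (univ.filter (fun u => Adj v u)).card) with hHp
    set Hm := univ.filter (fun v : V => 5 * m ≤ (univ.filter (fun u => Adj u v)).card) with hHm
    have hHpcard : m ≤ Hp.card := many_big_outdeg Adj hT m hm hcard
    have hHmcard : m ≤ Hm.card := by
      have h := many_big_outdeg (fun u v => Adj v u) (flip_tournament hT) m hm hcard
      exact h
    have hcover : ∀ v : V, v ∉ Hm → v ∈ Hp := by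
      intro v hv
      rw [hHm, Finset.mem_filter] at hv
      push_neg at hv
      have := hv (Finset.mem_univ v)
      rw [hHp, Finset.mem_filter]
      refine ⟨Finset.mem_univ _, ?_⟩
      by_contra hc
      push_neg at hc
      exact absurd (cover_lemma Adj hT m hm hcard v hc) (by omega)
    -- choose disjoint Xf ⊆ Hp, Yf ⊆ Hm of size m
    obtain ⟨Xf, Yf, hXsub, hYsub, hXcard, hYcard, hdisj⟩ :
        ∃ Xf Yf : Finset V, Xf ⊆ Hp ∧ Yf ⊆ Hm ∧ Xf.card = m ∧ Yf.card = m ∧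
          Disjoint Xf Yf := by
      by_cases hbig : 2 * m ≤ Hm.card
      · obtain ⟨Xf, hXsub, hXcard⟩ := Finset.exists_subset_card_eq hHpcard
        have : m ≤ (Hm \ Xf).card := by
          have h1 : Hm.card - Xf.card ≤ (Hm \ Xf).card := Finset.le_card_sdiff _ _
          omega
        obtain ⟨Yf, hYsub, hYcard⟩ := Finset.exists_subset_card_eq this
        refine ⟨Xf, Yf, hXsub, fun v hv => (Finset.mem_sdiff.1 (hYsub hv)).1, hXcard, hYcard, ?_⟩
        rw [Finset.disjoint_left]
        intro a haX haY
        exact (Finset.mem_sdiff.1 (hYsub haY)).2 haX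
      · push_neg at hbig
        obtain ⟨Yf, hYsub, hYcard⟩ := Finset.exists_subset_card_eq hHmcard
        have hHpbig : m ≤ (Hp \ Yf).card := by
          have hsub2 : univ \ Hm ⊆ Hp := fun v hv =>
            hcover v (Finset.mem_sdiff.1 hv).2
          have h0 : (univ \ Hm).card = Fintype.card V - Hm.card := by
            rw [Finset.card_sdiff_of_subset (Finset.subset_univ _), Finset.card_univ]
          have h1 : (univ \ Hm).card ≤ Hp.card := Finset.card_le_card hsub2
          have h2 : Hp.card - Yf.card ≤ (Hp \ Yf).card := Finset.le_card_sdiff _ _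
          omega
        obtain ⟨Xf, hXsub, hXcard⟩ := Finset.exists_subset_card_eq hHpbig
        refine ⟨Xf, Yf, fun v hv => (Finset.mem_sdiff.1 (hXsub hv)).1, hYsub, hXcard, hYcard, ?_⟩
        rw [Finset.disjoint_left]
        intro a haX haY
        exact (Finset.mem_sdiff.1 (hXsub haX)).2 haY
    obtain ⟨x, y, hxinj, hyinj, hxy, hxX, hyY⟩ := assemble Adj m Xf Yf hdisj hXcard hYcard
    refine ⟨x, y, hxinj, hyinj, hxy, ?_⟩
    intro σ
    have hxdeg : ∀ i, 5 * m ≤ (univ.filter (fun u => Adj (x i) u)).card := by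
      intro i
      have := hXsub (hxX i)
      rw [hHp, Finset.mem_filter] at this
      exact this.2
    have hydeg : ∀ i, 5 * m ≤ (univ.filter (fun u => Adj u (y i))).card := by
      intro i
      have := hYsub (hyY i)
      rw [hHm, Finset.mem_filter] at this
      exact this.2
    obtain ⟨P, hP1, hP2⟩ := greedy_paths Adj hT m hm hstar Xf Yf hdisj hXcard hYcard
      x y hxinj hyinj hxX hyY hxdeg hydeg σ m (le_refl m)
    refine ⟨P, ?_, ?_⟩
    · intro i
      obtain ⟨-, -, -, -, h⟩ := hP1 i i.isLt
      exact h
    · intro i j hij v hvi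
      exact hP2 i j i.isLt j.isLt hij v hvi
end

section
/- Let (v_1, v_2, ..., v_k) be a partial greedy in-dominating set in a tournament T, and let E be the set of vertices of T which are not in-dominated by {v_1, ..., v_k} (i.e. the vertices u outside {v_1,...,v_k} such that u v_i is not an edge for any i). Then every u ∈ E satisfies d^+(u) ≥ 2^{k-1} |E|, where d^+(u) is the out-degree of u in T. -/
/-- The out-degree of `u`: the number of vertices `w` with an edge `u → w`. -/
noncomputable def outDeg {V : Type*} (Adj : V → V → Prop) (u : V) : ℕ :=
  {w | Adj u w}.ncard

/-- The in-degree of `u` within the subtournament induced on `A`: the number of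
vertices `w ∈ A` with an edge `w → u`. -/
noncomputable def inDegOn {V : Type*} (Adj : V → V → Prop) (A : Set V) (u : V) : ℕ :=
  {w ∈ A | Adj w u}.ncard

/-- `N⁺(v_1) ∩ ⋯ ∩ N⁺(v_{i-1})`, the common out-neighbourhood of the first `i`
vertices of the sequence `v` (the whole vertex set when `i = 0`). -/
def greedySet {V : Type*} (Adj : V → V → Prop) {k : ℕ} (v : Fin k → V) (i : Fin k) : Set V :=
  {u | ∀ j : Fin k, j < i → Adj (v j) u}

/-- `(v_1, …, v_k)` is a partial greedy in-dominating set: each `v_i` is a vertex of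
maximum in-degree in the subtournament induced on `N⁺(v_1) ∩ ⋯ ∩ N⁺(v_{i-1})`. -/
def IsPartialGreedyInDomSeq {V : Type*} (Adj : V → V → Prop) {k : ℕ} (v : Fin k → V) : Prop :=
  ∀ i : Fin k, v i ∈ greedySet Adj v i ∧
    ∀ u ∈ greedySet Adj v i,
      inDegOn Adj (greedySet Adj v i) u ≤ inDegOn Adj (greedySet Adj v i) (v i)

section Aux
variable {V : Type*} [DecidableEq V] (Adj : V → V → Prop) [DecidableRel Adj]

lemma tourn_split (hT : IsTournament Adj) (A : Finset V) (x : V) (hx : x ∈ A) :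
    A.card = 1 + (A.filter fun w => Adj w x).card + (A.filter fun w => Adj x w).card := by
  have hxx := hT.1 x
  have hA : A = insert x ((A.filter fun w => Adj w x) ∪ (A.filter fun w => Adj x w)) := by
    ext w
    simp only [Finset.mem_insert, Finset.mem_union, Finset.mem_filter]
    constructor
    · intro hw
      by_cases hwx : w = x
      · exact Or.inl hwx
      · by_cases h : Adj w x
        · exact Or.inr (Or.inl ⟨hw, h⟩)
        · exact Or.inr (Or.inr ⟨hw, (hT.2 x w (Ne.symm hwx)).mpr h⟩)
    · rintro (rfl | ⟨hw, _⟩ | ⟨hw, _⟩)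
      · exact hx
      · exact hw
      · exact hw
  have hdisj : Disjoint (A.filter fun w => Adj w x) (A.filter fun w => Adj x w) := by
    rw [Finset.disjoint_left]
    intro w h1 h2
    simp only [Finset.mem_filter] at h1 h2
    rcases eq_or_ne w x with rfl | hne
    · exact hxx h1.2
    · exact ((hT.2 w x hne).mp h1.2) h2.2
  have hxnot : x ∉ (A.filter fun w => Adj w x) ∪ (A.filter fun w => Adj x w) := by
    simp [hxx]
  have := congrArg Finset.card hA
  rw [Finset.card_insert_of_notMem hxnot, Finset.card_union_of_disjoint hdisj] at this
  omega

omit [DecidableEq V] in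
lemma sum_in_eq_sum_out (A : Finset V) :
    ∑ x ∈ A, (A.filter fun w => Adj w x).card = ∑ x ∈ A, (A.filter fun w => Adj x w).card := by
  simp_rw [Finset.card_filter]
  exact Finset.sum_comm

lemma out_le_in (hT : IsTournament Adj) (A : Finset V) (x : V) (hx : x ∈ A)
    (hmax : ∀ u ∈ A, (A.filter fun w => Adj w u).card ≤ (A.filter fun w => Adj w x).card) :
    (A.filter fun w => Adj x w).card ≤ (A.filter fun w => Adj w x).card := by
  have hpos : 0 < A.card := Finset.card_pos.mpr ⟨x, hx⟩
  have h1 : A.card * A.card = A.card + 2 * ∑ u ∈ A, (A.filter fun w => Adj w u).card := by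
    calc A.card * A.card = ∑ _u ∈ A, A.card := by rw [Finset.sum_const, smul_eq_mul]
    _ = ∑ u ∈ A, (1 + (A.filter fun w => Adj w u).card + (A.filter fun w => Adj u w).card) :=
        Finset.sum_congr rfl (fun u hu => tourn_split Adj hT A u hu)
    _ = A.card + (∑ u ∈ A, (A.filter fun w => Adj w u).card
          + ∑ u ∈ A, (A.filter fun w => Adj u w).card) := by
        rw [Finset.sum_add_distrib, Finset.sum_add_distrib, Finset.sum_const, smul_eq_mul,
          mul_one]
        ring
    _ = A.card + 2 * ∑ u ∈ A, (A.filter fun w => Adj w u).card := by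
        rw [← sum_in_eq_sum_out Adj A]; ring
  have h2 : ∑ u ∈ A, (A.filter fun w => Adj w u).card
      ≤ A.card * (A.filter fun w => Adj w x).card :=
    le_trans (Finset.sum_le_sum hmax) (by rw [Finset.sum_const, smul_eq_mul])
  have h3 := tourn_split Adj hT A x hx
  have h4 : A.card * A.card ≤ A.card * (1 + 2 * (A.filter fun w => Adj w x).card) := by
    calc A.card * A.card = A.card + 2 * ∑ u ∈ A, (A.filter fun w => Adj w u).card := h1
    _ ≤ A.card + 2 * (A.card * (A.filter fun w => Adj w x).card) :=
        Nat.add_le_add_left (Nat.mul_le_mul_left 2 h2) _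
    _ = A.card * (1 + 2 * (A.filter fun w => Adj w x).card) := by ring
  have h5 := Nat.le_of_mul_le_mul_left h4 hpos
  omega

end Aux


/-- If `(v_1, …, v_k)` is a partial greedy in-dominating set in a tournament and `E`
is the set of vertices not in-dominated by `{v_1, …, v_k}`, then every `u ∈ E`
satisfies `d⁺(u) ≥ 2^(k-1) |E|`. -/
theorem greedy_in_dominating_set_undominated_have_large_outdegree
    {V : Type*} [Fintype V] (Adj : V → V → Prop) (hT : IsTournament Adj)
    (k : ℕ) (hk : 1 ≤ k) (v : Fin k → V) (hv : IsPartialGreedyInDomSeq Adj v)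
    (E : Set V)
    (hE : E = {u | u ∉ Set.range v ∧ ∀ i : Fin k, ¬ Adj u (v i)}) :
    ∀ u ∈ E, 2 ^ (k - 1) * E.ncard ≤ outDeg Adj u := by
  classical
  intro u hu
  set B : ℕ → Finset V := fun i =>
    Finset.univ.filter (fun w => ∀ j : Fin k, (j : ℕ) < i → Adj (v j) w) with hB
  have hmemB : ∀ (w : V) (i : ℕ), w ∈ B i ↔ ∀ j : Fin k, (j : ℕ) < i → Adj (v j) w := by
    intro w i
    simp only [hB, Finset.mem_filter, Finset.mem_univ, true_and]
  have hgreedy : ∀ (i : ℕ) (hi : i < k), greedySet Adj v ⟨i, hi⟩ = ↑(B i) := by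
    intro i hi; ext w
    simp only [greedySet, Set.mem_setOf_eq, Finset.coe_filter, Fin.lt_def, hB,
      Finset.mem_coe, Finset.mem_filter, Finset.mem_univ, true_and]
  have hindeg : ∀ (i : ℕ) (x : V),
      inDegOn Adj (↑(B i) : Set V) x = ((B i).filter fun w => Adj w x).card := by
    intro i x
    rw [inDegOn, show {w ∈ (↑(B i) : Set V) | Adj w x} = ↑((B i).filter fun w => Adj w x) by
      ext w; simp, Set.ncard_coe_finset]
  have hEB : ∀ (i : ℕ) (x : V), x ∈ E → x ∈ B i := by
    intro i x hx
    rw [hE] at hx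
    rw [hmemB]
    intro j _
    have hne : v j ≠ x := fun h => hx.1 ⟨j, h⟩
    exact (hT.2 (v j) x hne).mpr (hx.2 j)
  have hstep : ∀ (i : ℕ) (hi : i < k),
      B (i + 1) = (B i).filter (fun w => Adj (v ⟨i, hi⟩) w) := by
    intro i hi
    ext w
    simp only [hmemB, Finset.mem_filter]
    constructor
    · intro h
      exact ⟨fun j hj => h j (by omega), h ⟨i, hi⟩ (Nat.lt_succ_self i)⟩
    · rintro ⟨h1, h2⟩ j hj
      rcases Nat.lt_or_ge (j : ℕ) i with h | h
      · exact h1 j h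
      · have hji : j = ⟨i, hi⟩ := Fin.ext (show (j : ℕ) = i by omega)
        rw [hji]; exact h2
  have hkey : ∀ (i : ℕ), i < k → 2 * (B (i + 1)).card ≤ (B i).card := by
    intro i hi
    have hvi := hv ⟨i, hi⟩
    have hvin : v ⟨i, hi⟩ ∈ B i := by
      rw [← Finset.mem_coe, ← hgreedy i hi]; exact hvi.1
    have hmax : ∀ x ∈ B i, ((B i).filter fun w => Adj w x).card
        ≤ ((B i).filter fun w => Adj w (v ⟨i, hi⟩)).card := by
      intro x hx
      have := hvi.2 x (by rw [hgreedy i hi]; exact hx)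
      rwa [hgreedy i hi, hindeg, hindeg] at this
    have hio := out_le_in Adj hT (B i) _ hvin hmax
    have hsplit := tourn_split Adj hT (B i) _ hvin
    have hcard : (B (i + 1)).card = ((B i).filter fun w => Adj (v ⟨i, hi⟩) w).card := by
      rw [hstep i hi]
    omega
  have hchain : ∀ m, m ≤ k - 1 → 2 ^ m * (B k).card ≤ (B (k - m)).card := by
    intro m
    induction m with
    | zero => intro _; simp
    | succ n ih =>
      intro hm
      have hn := ih (by omega)
      have hlt : k - (n + 1) < k := by omega
      have heq : k - n = (k - (n + 1)) + 1 := by omega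
      have hk2 := hkey (k - (n + 1)) hlt
      rw [← heq] at hk2
      calc 2 ^ (n + 1) * (B k).card = 2 * (2 ^ n * (B k).card) := by ring
      _ ≤ 2 * (B (k - n)).card := by omega
      _ ≤ (B (k - (n + 1))).card := hk2
  have hchain1 := hchain (k - 1) le_rfl
  have hk1 : k - (k - 1) = 1 := by omega
  rw [hk1] at hchain1
  have hEcard : E.ncard ≤ (B k).card := by
    rw [← Set.ncard_coe_finset]
    exact Set.ncard_le_ncard (fun x hx => hEB k x hx) (B k).finite_toSet
  -- out-degree of u is at least (B 1).card
  have hu0 : u ∈ B 0 := hEB 0 u hu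
  have h0k : (0 : ℕ) < k := hk
  have hvi := hv ⟨0, h0k⟩
  have hvin : v ⟨0, h0k⟩ ∈ B 0 := by
    rw [← Finset.mem_coe, ← hgreedy 0 h0k]; exact hvi.1
  have hmax0 : ((B 0).filter fun w => Adj w u).card
      ≤ ((B 0).filter fun w => Adj w (v ⟨0, h0k⟩)).card := by
    have := hvi.2 u (by rw [hgreedy 0 h0k]; exact hu0)
    rwa [hgreedy 0 h0k, hindeg, hindeg] at this
  have hsplitu := tourn_split Adj hT (B 0) u hu0
  have hsplitv := tourn_split Adj hT (B 0) _ hvin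
  have hcard1 : (B 1).card = ((B 0).filter fun w => Adj (v ⟨0, h0k⟩) w).card := by
    rw [hstep 0 h0k]
  have houtdeg : outDeg Adj u = ((B 0).filter fun w => Adj u w).card := by
    rw [outDeg, show {w | Adj u w} = ↑((B 0).filter fun w => Adj u w) by
      ext w; simp [hmemB], Set.ncard_coe_finset]
  have hout : (B 1).card ≤ outDeg Adj u := by omega
  calc 2 ^ (k - 1) * E.ncard ≤ 2 ^ (k - 1) * (B k).card := Nat.mul_le_mul_left _ hEcard
  _ ≤ (B 1).card := hchain1
  _ ≤ outDeg Adj u := hout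
end

section
/- Let T be a tournament, let m ≥ 1, let x_1, ..., x_m, y_1, ..., y_m be 2m distinct vertices of T, and suppose that for every i and j in {1, ..., m} there are at least 4m + 1 internally vertex-disjoint directed paths of length at most 3 from x_i to y_j. Then for any permutation σ of {1, ..., m} there are pairwise vertex-disjoint directed paths P_1, ..., P_m, each of length at most 3, such that P_i goes from x_i to y_{σ(i)}. -/
/-- Let `x_1, …, x_m, y_1, …, y_m` be `2m` distinct vertices of a tournament, and
suppose that for all `i, j` there are at least `4m + 1` internally vertex-disjoint
directed paths of length at most `3` from `x_i` to `y_j`. Then for any permutation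
`σ` of `[m]` there are pairwise vertex-disjoint directed paths `P_1, …, P_m`, each
of length at most `3`, with `P_i` going from `x_i` to `y_{σ(i)}`. -/
theorem linkage_from_many_internally_disjoint_short_paths
    {V : Type*} [Fintype V] [DecidableEq V] (Adj : V → V → Prop)
    (hT : IsTournament Adj) (m : ℕ) (hm : 1 ≤ m)
    (x y : Fin m → V)
    (hx : Function.Injective x) (hy : Function.Injective y)
    (hxy : ∀ i j, x i ≠ y j)
    (hpaths : ∀ i j : Fin m, ∃ Q : Fin (4 * m + 1) → List V,
      (∀ a, IsDipath Adj (x i) (y j) (Q a) ∧ (Q a).length ≤ 4) ∧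
      ∀ a b, a ≠ b → ∀ v, v ∈ Q a → v ∈ Q b → v = x i ∨ v = y j) :
    ∀ σ : Equiv.Perm (Fin m), ∃ P : Fin m → List V,
      (∀ i, IsDipath Adj (x i) (y (σ i)) (P i) ∧ (P i).length ≤ 4) ∧
      ∀ i j, i ≠ j → ∀ v, v ∈ P i → v ∉ P j := by
  intro σ
  suffices h : ∀ k, k ≤ m → ∃ P : Fin m → List V,
      ∀ i : Fin m, (i : ℕ) < k →
        (IsDipath Adj (x i) (y (σ i)) (P i) ∧ (P i).length ≤ 4) ∧
        (∀ v ∈ P i, v = x i ∨ v = y (σ i) ∨ ∀ l, v ≠ x l ∧ v ≠ y l) ∧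
        (∀ j : Fin m, (j : ℕ) < k → j ≠ i → ∀ v, v ∈ P i → v ∉ P j) by
    obtain ⟨P, hP⟩ := h m le_rfl
    exact ⟨P, fun i => (hP i i.isLt).1,
      fun i j hij v hvi => (hP i i.isLt).2.2 j j.isLt (Ne.symm hij) v hvi⟩
  intro k
  induction k with
  | zero => exact fun _ => ⟨fun _ => [], fun i hi => absurd hi (Nat.not_lt_zero _)⟩
  | succ k ih =>
    intro hk1
    have hkm : k < m := hk1
    obtain ⟨P, hP⟩ := ih (Nat.le_of_succ_le hk1)
    set K : Fin m := ⟨k, hkm⟩ with hK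
    obtain ⟨Q, hQ1, hQ2⟩ := hpaths K (σ K)
    -- the forbidden set
    set F : Finset V := Finset.univ.image x ∪ Finset.univ.image y ∪
      Finset.univ.biUnion (fun j : Fin m =>
        if (j : ℕ) < k then (P j).toFinset \ {x j, y (σ j)} else ∅) with hF
    have hxF : ∀ l, x l ∈ F := fun l => by
      simp [hF]
    have hyF : ∀ l, y l ∈ F := fun l => by
      simp [hF]
    have hFP : ∀ j : Fin m, (j : ℕ) < k → ∀ v ∈ P j, v ∈ F := by
      intro j hj v hv
      by_cases h1 : v = x j
      · exact h1 ▸ hxF j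
      by_cases h2 : v = y (σ j)
      · exact h2 ▸ hyF (σ j)
      · simp only [hF, Finset.mem_union, Finset.mem_biUnion]
        refine Or.inr ⟨j, Finset.mem_univ _, ?_⟩
        rw [if_pos hj]
        simp [List.mem_toFinset, hv, h1, h2]
    have hcard : F.card ≤ 4 * m := by
      have h1 : (Finset.univ.image x).card ≤ m := by
        simpa using Finset.card_image_le (s := (Finset.univ : Finset (Fin m))) (f := x)
      have h2 : (Finset.univ.image y).card ≤ m := by
        simpa using Finset.card_image_le (s := (Finset.univ : Finset (Fin m))) (f := y)
      have h3 : (Finset.univ.biUnion (fun j : Fin m =>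
          if (j : ℕ) < k then (P j).toFinset \ {x j, y (σ j)} else ∅)).card ≤ 2 * m := by
        calc _ ≤ ∑ j : Fin m, (if (j : ℕ) < k then (P j).toFinset \ {x j, y (σ j)} else ∅).card :=
              Finset.card_biUnion_le
          _ ≤ ∑ _j : Fin m, 2 := by
              refine Finset.sum_le_sum fun j _ => ?_
              by_cases hj : (j : ℕ) < k
              · rw [if_pos hj]
                obtain ⟨⟨hpne, hnd, hch, hhd, hlast⟩, hlen⟩ := (hP j hj).1
                have hxin : x j ∈ P j := by
                  have := List.mem_of_mem_head? (l := P j) (a := x j)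
                  exact this (by rw [hhd]; rfl)
                have hyin : y (σ j) ∈ P j := by
                  have := List.mem_of_mem_getLast? (l := P j) (a := y (σ j))
                  exact this (by rw [hlast]; rfl)
                have hsub : ({x j, y (σ j)} : Finset V) ⊆ (P j).toFinset := by
                  intro v hv
                  simp only [Finset.mem_insert, Finset.mem_singleton] at hv
                  rcases hv with rfl | rfl <;> simp [List.mem_toFinset, hxin, hyin]
                have hpair : ({x j, y (σ j)} : Finset V).card = 2 := by
                  rw [Finset.card_insert_of_notMem (by simp [hxy j (σ j)]),
                    Finset.card_singleton]
                have hs4 : (P j).toFinset.card ≤ 4 :=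
                  le_trans (List.toFinset_card_le _) hlen
                rw [Finset.card_sdiff_of_subset hsub, hpair]
                omega
              · rw [if_neg hj]; simp
          _ = 2 * m := by simp [Finset.sum_const, mul_comm]
      calc F.card ≤ (Finset.univ.image x ∪ Finset.univ.image y).card +
            (Finset.univ.biUnion _).card := Finset.card_union_le _ _
        _ ≤ ((Finset.univ.image x).card + (Finset.univ.image y).card) +
            (Finset.univ.biUnion _).card := by
            exact Nat.add_le_add_right (Finset.card_union_le _ _) _
        _ ≤ m + m + 2 * m := by omega
        _ = 4 * m := by ring
    -- find a good candidate path
    have hgood : ∃ a, ∀ v ∈ Q a, v = x K ∨ v = y (σ K) ∨ v ∉ F := by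
      by_contra hcon
      push_neg at hcon
      choose v hv1 hv2 hv3 hv4 using hcon
      have hinj : Set.InjOn v ↑(Finset.univ : Finset (Fin (4 * m + 1))) := by
        intro a _ b _ hab
        by_contra hne
        rcases hQ2 a b hne (v a) (hv1 a) (hab ▸ hv1 b) with h | h
        exacts [hv2 a h, hv3 a h]
      have hle := Finset.card_le_card_of_injOn v (fun a _ => hv4 a) hinj
      simp only [Finset.card_univ, Fintype.card_fin] at hle
      omega
    obtain ⟨a, ha⟩ := hgood
    set p := Q a with hp
    have hjneK : ∀ j : Fin m, (j : ℕ) < k → j ≠ K := by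
      intro j hj hjK
      rw [hjK] at hj
      exact absurd hj (lt_irrefl _)
    have hKnot : ∀ j : Fin m, (j : ℕ) < k → x K ∉ P j ∧ y (σ K) ∉ P j := by
      intro j hj
      constructor
      · intro hmem
        rcases (hP j hj).2.1 _ hmem with h | h | h
        · exact hjneK j hj (hx h).symm
        · exact hxy K (σ j) h
        · exact (h K).1 rfl
      · intro hmem
        rcases (hP j hj).2.1 _ hmem with h | h | h
        · exact hxy j (σ K) h.symm
        · exact hjneK j hj (σ.injective (hy h)).symm
        · exact (h (σ K)).2 rfl
    have hcross : ∀ j : Fin m, (j : ℕ) < k → ∀ v, v ∈ p → v ∉ P j := by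
      intro j hj v hvp hvj
      rcases ha v hvp with h | h | h
      · exact (hKnot j hj).1 (h ▸ hvj)
      · exact (hKnot j hj).2 (h ▸ hvj)
      · exact h (hFP j hj v hvj)
    refine ⟨Function.update P K p, ?_⟩
    intro i hi
    by_cases hiK : i = K
    · subst hiK
      rw [Function.update_self]
      refine ⟨hQ1 a, ?_, ?_⟩
      · intro v hv
        rcases ha v hv with h | h | h
        · exact Or.inl h
        · exact Or.inr (Or.inl h)
        · refine Or.inr (Or.inr fun l => ⟨?_, ?_⟩)
          · intro heq; exact h (heq ▸ hxF l)
          · intro heq; exact h (heq ▸ hyF l)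
      · intro j hj hji v hvi hvj
        have hjk : (j : ℕ) < k := by
          have : (j : ℕ) ≠ k := fun h => hji (Fin.ext h)
          omega
        rw [Function.update_of_ne hji] at hvj
        exact hcross j hjk v hvi hvj
    · have hik : (i : ℕ) < k := by
        have : (i : ℕ) ≠ k := fun h => hiK (Fin.ext h)
        omega
      rw [Function.update_of_ne hiK]
      refine ⟨(hP i hik).1, (hP i hik).2.1, ?_⟩
      intro j hj hji v hvi hvj
      by_cases hjK : j = K
      · subst hjK
        rw [Function.update_self] at hvj
        exact hcross i hik v hvj hvi
      · have hjk : (j : ℕ) < k := by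
          have : (j : ℕ) ≠ k := fun h => hjK (Fin.ext h)
          omega
        rw [Function.update_of_ne hjK] at hvj
        exact (hP i hik).2.2 j hjk hji v hvi hvj
end

section
/- Let T be a tournament and let x and y be distinct vertices of T. Let I = N^+(x) ∩ N^-(y), let X = (N^+(x) ∪ {x}) \ (N^-(y) ∪ {y}), let Y = (N^-(y) ∪ {y}) \ (N^+(x) ∪ {x}), and let M be a matching of edges of T directed from X to Y. Then there are at least |I| + |M| internally vertex-disjoint directed paths of length at most 3 from x to y in T. -/
section aux
variable {V : Type*} [DecidableEq V] (Adj : V → V → Prop)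

def mpath (x y : V) (e : V × V) : List V :=
  if e.1 = x then (if e.2 = y then [x, y] else [x, e.2, y])
  else (if e.2 = y then [x, e.1, y] else [x, e.1, e.2, y])

lemma mpath_mem {x y v : V} {e : V × V} (h : v ∈ mpath x y e) :
    v = x ∨ v = y ∨ (v = e.1 ∧ e.1 ≠ x) ∨ (v = e.2 ∧ e.2 ≠ y) := by
  unfold mpath at h; split_ifs at h <;> simp at h <;> tauto

lemma mpath_dipath {x y : V} {e : V × V} (hxy : x ≠ y)
    (h1 : e.1 = x ∨ Adj x e.1) (h1' : e.1 ≠ y) (h2 : e.2 = y ∨ Adj e.2 y)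
    (h2' : e.2 ≠ x) (huv : Adj e.1 e.2) (hne : e.1 ≠ e.2) :
    IsDipath Adj x y (mpath x y e) ∧ (mpath x y e).length ≤ 4 := by
  unfold mpath IsDipath
  split_ifs with h h' h' <;> simp_all [List.Chain', List.isChain_cons_cons] <;> tauto

end aux

/-- Let `x ≠ y` be vertices of a tournament, `I = N⁺(x) ∩ N⁻(y)`,
`X = (N⁺(x) ∪ {x}) \ (N⁻(y) ∪ {y})`, `Y = (N⁻(y) ∪ {y}) \ (N⁺(x) ∪ {x})`, and let
`M` be a matching of edges directed from `X` to `Y`. Then there are at least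
`|I| + |M|` internally vertex-disjoint directed paths of length at most `3` from
`x` to `y`. -/
theorem many_internally_disjoint_short_paths
    {V : Type*} [Fintype V] [DecidableEq V] (Adj : V → V → Prop)
    (hT : IsTournament Adj) (x y : V) (hxy : x ≠ y)
    (I Xs Ys : Set V)
    (hI : I = {w | Adj x w} ∩ {w | Adj w y})
    (hXs : Xs = ({w | Adj x w} ∪ {x}) \ ({w | Adj w y} ∪ {y}))
    (hYs : Ys = ({w | Adj w y} ∪ {y}) \ ({w | Adj x w} ∪ {x}))
    (M : Finset (V × V))
    (hM : ∀ e ∈ M, e.1 ∈ Xs ∧ e.2 ∈ Ys ∧ Adj e.1 e.2)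
    (hMmatching : ∀ e ∈ M, ∀ f ∈ M, e ≠ f →
      e.1 ≠ f.1 ∧ e.1 ≠ f.2 ∧ e.2 ≠ f.1 ∧ e.2 ≠ f.2) :
    ∃ Q : Fin (I.ncard + M.card) → List V,
      (∀ a, IsDipath Adj x y (Q a) ∧ (Q a).length ≤ 4) ∧
      ∀ a b, a ≠ b → ∀ v, v ∈ Q a → v ∈ Q b → v = x ∨ v = y := by
  classical
  obtain ⟨hloop, hasym⟩ := hT
  -- membership facts
  have hIm : ∀ w ∈ I, Adj x w ∧ Adj w y := by
    intro w hw; rw [hI] at hw; exact hw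
  have hXm : ∀ u ∈ Xs, (u = x ∨ Adj x u) ∧ ¬ Adj u y ∧ u ≠ y := by
    intro u hu; rw [hXs] at hu
    obtain ⟨h1, h2⟩ := hu
    simp only [Set.mem_union, Set.mem_setOf_eq, Set.mem_singleton_iff, not_or] at h1 h2
    tauto
  have hYm : ∀ v ∈ Ys, (v = y ∨ Adj v y) ∧ ¬ Adj x v ∧ v ≠ x := by
    intro v hv; rw [hYs] at hv
    obtain ⟨h1, h2⟩ := hv
    simp only [Set.mem_union, Set.mem_setOf_eq, Set.mem_singleton_iff, not_or] at h1 h2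
    tauto
  have hIX : ∀ w ∈ I, ∀ u ∈ Xs, w ≠ u := by
    intro w hw u hu h; exact (hXm u hu).2.1 (h ▸ (hIm w hw).2)
  have hIY : ∀ w ∈ I, ∀ v ∈ Ys, w ≠ v := by
    intro w hw v hv h; exact (hYm v hv).2.1 (h ▸ (hIm w hw).1)
  have hXY : ∀ u ∈ Xs, ∀ v ∈ Ys, u ≠ v := by
    intro u hu v hv h
    rcases (hYm v hv).1 with h' | h'
    · exact (hXm u hu).2.2 (h.trans h')
    · exact (hXm u hu).2.1 (h ▸ h')
  have hIx : ∀ w ∈ I, w ≠ x := by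
    intro w hw h; exact hloop x (h ▸ (hIm w hw).1)
  have hIy : ∀ w ∈ I, w ≠ y := by
    intro w hw h; exact hloop y (h ▸ (hIm w hw).2)
  -- enumerations
  have hcard : I.toFinset.card = I.ncard := (Set.ncard_eq_toFinset_card' I).symm
  set eI : Fin I.ncard → V := fun i => (I.toFinset.equivFin.symm (Fin.cast hcard.symm i) : V)
    with heI
  have heImem : ∀ i, eI i ∈ I := fun i => by
    have := (I.toFinset.equivFin.symm (Fin.cast hcard.symm i)).2
    exact Set.mem_toFinset.mp this
  have heIinj : Function.Injective eI := by
    intro i j h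
    have := Subtype.ext h
    have := I.toFinset.equivFin.symm.injective this
    simpa [Fin.ext_iff] using congrArg Fin.val this
  set eM : Fin M.card → V × V := fun j => (M.equivFin.symm j : V × V) with heM
  have heMmem : ∀ j, eM j ∈ M := fun j => (M.equivFin.symm j).2
  have heMinj : ∀ i j, i ≠ j → eM i ≠ eM j := by
    intro i j hij h
    exact hij (M.equivFin.symm.injective (Subtype.ext h))
  refine ⟨fun a => if h : (a : ℕ) < I.ncard then [x, eI ⟨a, h⟩, y]
    else mpath x y (eM ⟨(a : ℕ) - I.ncard, by omega⟩), ?_, ?_⟩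
  · intro a
    by_cases h : (a : ℕ) < I.ncard
    · simp only [dif_pos h]
      set w := eI ⟨a, h⟩ with hw
      have hwI := heImem ⟨a, h⟩
      constructor
      · refine ⟨by simp, ?_, ?_, by simp, by simp⟩
        · simp [hIx w hwI, hIy w hwI, hxy, (hIx w hwI).symm]
        · simp [List.Chain', List.isChain_cons_cons, (hIm w hwI).1, (hIm w hwI).2]
      · simp
    · simp only [dif_neg h]
      set e := eM ⟨(a : ℕ) - I.ncard, by omega⟩ with he
      have heMem := heMmem ⟨(a : ℕ) - I.ncard, by omega⟩
      obtain ⟨h1, h2, h3⟩ := hM e heMem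
      exact mpath_dipath Adj hxy (hXm _ h1).1 (hXm _ h1).2.2 (hYm _ h2).1
        (hYm _ h2).2.2 h3 (hXY _ h1 _ h2)
  · intro a b hab v hva hvb
    by_cases ha : (a : ℕ) < I.ncard <;> by_cases hb : (b : ℕ) < I.ncard
    · simp only [dif_pos ha] at hva
      simp only [dif_pos hb] at hvb
      set w := eI ⟨a, ha⟩ with hw
      set w' := eI ⟨b, hb⟩ with hw'
      have hne : w ≠ w' := by
        intro h; apply hab; have := heIinj h
        simpa [Fin.ext_iff] using congrArg Fin.val this
      simp only [List.mem_cons, List.mem_singleton, List.not_mem_nil, or_false] at hva hvb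
      rcases hva with rfl | rfl | rfl
      · exact Or.inl rfl
      · rcases hvb with h | h | h
        · exact Or.inl h
        · exact absurd h hne
        · exact Or.inr h
      · exact Or.inr rfl
    · simp only [dif_pos ha] at hva
      simp only [dif_neg hb] at hvb
      set w := eI ⟨a, ha⟩ with hw
      have hwI := heImem ⟨a, ha⟩
      set e := eM ⟨(b : ℕ) - I.ncard, by omega⟩ with he
      have heMem := heMmem ⟨(b : ℕ) - I.ncard, by omega⟩
      obtain ⟨h1, h2, _⟩ := hM e heMem
      simp only [List.mem_cons, List.mem_singleton, List.not_mem_nil, or_false] at hva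
      rcases hva with rfl | rfl | rfl
      · exact Or.inl rfl
      · rcases mpath_mem hvb with h | h | ⟨h, _⟩ | ⟨h, _⟩
        · exact Or.inl h
        · exact Or.inr h
        · exact absurd h (hIX _ hwI e.1 h1)
        · exact absurd h (hIY _ hwI e.2 h2)
      · exact Or.inr rfl
    · simp only [dif_neg ha] at hva
      simp only [dif_pos hb] at hvb
      set w := eI ⟨b, hb⟩ with hw
      have hwI := heImem ⟨b, hb⟩
      set e := eM ⟨(a : ℕ) - I.ncard, by omega⟩ with he
      have heMem := heMmem ⟨(a : ℕ) - I.ncard, by omega⟩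
      obtain ⟨h1, h2, _⟩ := hM e heMem
      simp only [List.mem_cons, List.mem_singleton, List.not_mem_nil, or_false] at hvb
      rcases hvb with rfl | rfl | rfl
      · exact Or.inl rfl
      · rcases mpath_mem hva with h | h | ⟨h, _⟩ | ⟨h, _⟩
        · exact Or.inl h
        · exact Or.inr h
        · exact absurd h (hIX _ hwI e.1 h1)
        · exact absurd h (hIY _ hwI e.2 h2)
      · exact Or.inr rfl
    · simp only [dif_neg ha] at hva
      simp only [dif_neg hb] at hvb
      set e := eM ⟨(a : ℕ) - I.ncard, by omega⟩ with he
      set f := eM ⟨(b : ℕ) - I.ncard, by omega⟩ with hf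
      have heMem := heMmem ⟨(a : ℕ) - I.ncard, by omega⟩
      have hfMem := heMmem ⟨(b : ℕ) - I.ncard, by omega⟩
      have hef : e ≠ f := by
        apply heMinj
        intro h; apply hab
        have : (a : ℕ) - I.ncard = (b : ℕ) - I.ncard := by
          simpa [Fin.ext_iff] using h
        apply Fin.ext; omega
      obtain ⟨q1, q2, q3, q4⟩ := hMmatching e heMem f hfMem hef
      obtain ⟨he1, he2, _⟩ := hM e heMem
      obtain ⟨hf1, hf2, _⟩ := hM f hfMem
      rcases mpath_mem hva with h | h | ⟨h, h'⟩ | ⟨h, h'⟩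
      · exact Or.inl h
      · exact Or.inr h
      · rcases mpath_mem hvb with g | g | ⟨g, _⟩ | ⟨g, _⟩
        · exact Or.inl g
        · exact Or.inr g
        · exact absurd (h.symm.trans g) q1
        · exact absurd (h.symm.trans g) q2
      · rcases mpath_mem hvb with g | g | ⟨g, _⟩ | ⟨g, _⟩
        · exact Or.inl g
        · exact Or.inr g
        · exact absurd (h.symm.trans g) q3
        · exact absurd (h.symm.trans g) q4
end
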